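/- Let h = L²(ℝ³) and let F(h) be the bosonic Fock space. Given f₀ ∈ h, there exists a real-linear closed subspace k ⊆ h such that: (1) k is invariant under e^{−tω} for all t ≥ 0, where ω(k)=|k|; (2) k + ik = h; (3) the inner product ⟨f, g⟩ is real for all f, g ∈ k (equivalently the field operators Φ(f) = a*(f) + a(f) for f ∈ k mutually commute); (4) f₀ ∈ k. -/

import Mathlib

open MeasureTheory

set_option maxHeartbeats 1000000
set_option synthInstance.maxHeartbeats 400000
noncomputable section

/-- One-boson momentum space `ℝ³`. -/
abbrev K3 := EuclideanSpace ℝ (Fin 3)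

/-- The one-boson Hilbert space `h = L²(ℝ³)`. -/
abbrev OneBoson := Lp ℂ 2 (volume : Measure K3)

/-- Given a phase function `u`, the set of `f ∈ L²` such that `conj u * f` is
a.e. real-valued is a closed real subspace. -/
def phaseRealSubspace (u : K3 → ℂ) : Submodule ℝ OneBoson where
  carrier := {f : OneBoson | ∀ᵐ x : K3, ((starRingEnd ℂ) (u x) * f x).im = 0}
  add_mem' := by
    intro a b ha hb
    filter_upwards [ha, hb, Lp.coeFn_add a b] with x hax hbx habx
    rw [habx, Pi.add_apply, mul_add, Complex.add_im, hax, hbx, add_zero]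
  zero_mem' := by
    filter_upwards [Lp.coeFn_zero ℂ 2 (volume : Measure K3)] with x hx
    simp [hx]
  smul_mem' := by
    intro c f hf
    filter_upwards [hf, Lp.coeFn_smul c f] with x hfx hcx
    rw [hcx, Pi.smul_apply, Complex.real_smul, mul_left_comm, Complex.mul_im, hfx,
      Complex.ofReal_im, mul_zero, zero_mul, add_zero]

theorem exists_real_subspace
    (f₀ : OneBoson) :
    ∃ k : Submodule ℝ OneBoson,
      IsClosed (k : Set OneBoson) ∧
      (∀ t : ℝ, 0 ≤ t → ∀ f ∈ k, ∃ g ∈ k,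
        (∀ᵐ x : K3, g x = (Real.exp (-t * ‖x‖) : ℂ) * f x)) ∧
      (∀ f : OneBoson, ∃ g ∈ k, ∃ h ∈ k, f = g + Complex.I • h) ∧
      (∀ f ∈ k, ∀ g ∈ k, (inner ℂ f g : ℂ).im = 0) ∧
      f₀ ∈ k := by
  classical
  set F : K3 → ℂ := ⇑f₀ with hF
  have hFm : StronglyMeasurable F := Lp.stronglyMeasurable f₀
  set u : K3 → ℂ := fun x => if F x = 0 then 1 else F x / ‖F x‖ with hu_def
  have hu_norm : ∀ x, ‖u x‖ = 1 := by
    intro x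
    by_cases h : F x = 0
    · simp [hu_def, h]
    · have hn : ‖F x‖ ≠ 0 := norm_ne_zero_iff.mpr h
      simp [hu_def, h, norm_div, abs_of_nonneg (norm_nonneg (F x)), div_self hn]
  have hu_conj : ∀ x, (starRingEnd ℂ) (u x) * u x = 1 := by
    intro x
    rw [mul_comm, Complex.mul_conj]
    norm_cast
    rw [Complex.normSq_eq_norm_sq, hu_norm x, one_pow]
  have hu_meas : Measurable u := by
    refine Measurable.ite (hFm.measurable (measurableSet_singleton 0)) measurable_const ?_
    exact hFm.measurable.div (Complex.measurable_ofReal.comp hFm.measurable.norm)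
  refine ⟨phaseRealSubspace u, ?_, ?_, ?_, ?_, ?_⟩
  · -- closedness
    refine IsSeqClosed.isClosed ?_
    intro s p hs hsp
    have h1 : Filter.Tendsto (fun n => eLpNorm (⇑(s n) - ⇑p) 2 volume) Filter.atTop (nhds 0) :=
      (Lp.tendsto_Lp_iff_tendsto_eLpNorm' s p).mp hsp
    have h2 : TendstoInMeasure volume (fun n => ⇑(s n)) Filter.atTop ⇑p :=
      tendstoInMeasure_of_tendsto_eLpNorm (by norm_num) (fun n => Lp.aestronglyMeasurable (s n))
        (Lp.aestronglyMeasurable p) h1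
    obtain ⟨ns, -, hae⟩ := h2.exists_seq_tendsto_ae
    have hall : ∀ᵐ x : K3, ∀ n, ((starRingEnd ℂ) (u x) * (s n) x).im = 0 :=
      MeasureTheory.ae_all_iff.mpr (fun n => hs n)
    filter_upwards [hall, hae] with x h3 h4
    have h5 : Filter.Tendsto (fun i => ((starRingEnd ℂ) (u x) * (s (ns i)) x).im)
        Filter.atTop (nhds (((starRingEnd ℂ) (u x) * p x).im)) :=
      (Complex.continuous_im.tendsto _).comp (h4.const_mul _)
    have h6 : Filter.Tendsto (fun i => ((starRingEnd ℂ) (u x) * (s (ns i)) x).im)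
        Filter.atTop (nhds 0) := by
      simpa [h3] using tendsto_const_nhds (α := ℝ) (f := Filter.atTop (α := ℕ)) (a := 0)
    exact tendsto_nhds_unique h5 h6
  · -- invariance under e^{-tω}
    intro t ht f hf
    have hexp : ∀ x : K3, ‖((Real.exp (-t * ‖x‖) : ℝ) : ℂ)‖ ≤ 1 := by
      intro x
      rw [Complex.norm_real, Real.norm_eq_abs, abs_of_nonneg (Real.exp_nonneg _)]
      exact Real.exp_le_one_iff.mpr (by nlinarith [norm_nonneg x])
    have hm : MemLp (fun x : K3 => ((Real.exp (-t * ‖x‖) : ℝ) : ℂ) * f x) 2 volume := by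
      refine MemLp.of_le (Lp.memLp f) ?_ ?_
      · exact (Complex.measurable_ofReal.comp
          ((Real.measurable_exp.comp (measurable_norm.const_mul (-t))))).aestronglyMeasurable.mul
          (Lp.aestronglyMeasurable f)
      · refine Filter.Eventually.of_forall fun x => ?_
        rw [norm_mul]
        calc ‖((Real.exp (-t * ‖x‖) : ℝ) : ℂ)‖ * ‖f x‖ ≤ 1 * ‖f x‖ :=
              mul_le_mul_of_nonneg_right (hexp x) (norm_nonneg _)
          _ = ‖f x‖ := one_mul _
    refine ⟨hm.toLp _, ?_, hm.coeFn_toLp⟩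
    filter_upwards [hf, hm.coeFn_toLp] with x h1 h2
    rw [h2, mul_left_comm, Complex.mul_im, h1, Complex.ofReal_im, mul_zero, zero_mul,
      add_zero]
  · -- k + ik = h
    intro f
    have hfm : StronglyMeasurable (⇑f) := Lp.stronglyMeasurable f
    set A : K3 → ℂ := fun x => (starRingEnd ℂ) (u x) * f x with hA_def
    have hAm : Measurable A := (continuous_star.measurable.comp hu_meas).mul hfm.measurable
    have hbound : ∀ x, ‖A x‖ ≤ ‖f x‖ := by
      intro x
      rw [hA_def]
      simp only
      rw [norm_mul, RCLike.norm_conj, hu_norm x, one_mul]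
    have hmg : MemLp (fun x => u x * ((A x).re : ℂ)) 2 volume := by
      refine MemLp.of_le (Lp.memLp f) ?_ ?_
      · exact hu_meas.aestronglyMeasurable.mul
          (Complex.measurable_ofReal.comp (Complex.measurable_re.comp hAm)).aestronglyMeasurable
      · refine Filter.Eventually.of_forall fun x => ?_
        rw [norm_mul, hu_norm x, one_mul, Complex.norm_real, Real.norm_eq_abs]
        exact (Complex.abs_re_le_norm (A x)).trans (hbound x)
    have hmh : MemLp (fun x => u x * ((A x).im : ℂ)) 2 volume := by
      refine MemLp.of_le (Lp.memLp f) ?_ ?_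
      · exact hu_meas.aestronglyMeasurable.mul
          (Complex.measurable_ofReal.comp (Complex.measurable_im.comp hAm)).aestronglyMeasurable
      · refine Filter.Eventually.of_forall fun x => ?_
        rw [norm_mul, hu_norm x, one_mul, Complex.norm_real, Real.norm_eq_abs]
        exact (Complex.abs_im_le_norm (A x)).trans (hbound x)
    refine ⟨hmg.toLp _, ?_, hmh.toLp _, ?_, ?_⟩
    · filter_upwards [hmg.coeFn_toLp] with x hx
      rw [hx, ← mul_assoc, hu_conj x, one_mul]
      exact Complex.ofReal_im _
    · filter_upwards [hmh.coeFn_toLp] with x hx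
      rw [hx, ← mul_assoc, hu_conj x, one_mul]
      exact Complex.ofReal_im _
    · refine Lp.ext ?_
      filter_upwards [hmg.coeFn_toLp, hmh.coeFn_toLp,
        Lp.coeFn_add (hmg.toLp _) (Complex.I • hmh.toLp _),
        Lp.coeFn_smul Complex.I (hmh.toLp _)] with x h1 h2 h3 h4
      rw [h3, Pi.add_apply, h1, h4, Pi.smul_apply, h2, smul_eq_mul]
      have h5 := Complex.re_add_im (A x)
      have h6 : u x * A x = f x := by
        rw [hA_def]
        simp only
        rw [← mul_assoc, mul_comm (u x), hu_conj x, one_mul]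
      linear_combination -h6 - u x * h5
  · -- inner products are real
    intro f hf g hg
    have hae : ∀ᵐ x : K3, (inner ℂ (f x) (g x) : ℂ).im = 0 := by
      filter_upwards [hf, hg] with x h1 h2
      rw [RCLike.inner_apply']
      have key : (starRingEnd ℂ) (f x) * g x =
          (starRingEnd ℂ) ((starRingEnd ℂ) (u x) * f x) * ((starRingEnd ℂ) (u x) * g x) := by
        rw [map_mul, Complex.conj_conj]
        linear_combination (-(starRingEnd ℂ) (f x) * g x) * hu_conj x
      rw [key, Complex.mul_im, Complex.conj_re, Complex.conj_im, h1, h2]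
      ring
    have hint := L2.integrable_inner (𝕜 := ℂ) f g
    have h0 : ∫ x : K3, RCLike.im (inner ℂ (f x) (g x) : ℂ) ∂volume =
        RCLike.im (∫ x : K3, (inner ℂ (f x) (g x) : ℂ) ∂volume) := integral_im hint
    rw [L2.inner_def, ← RCLike.im_eq_complex_im]
    rw [← h0]
    rw [MeasureTheory.integral_eq_zero_of_ae]
    filter_upwards [hae] with x hx
    rw [RCLike.im_eq_complex_im] at *
    simpa using hx
  · -- f₀ ∈ k
    show ∀ᵐ x : K3, ((starRingEnd ℂ) (u x) * F x).im = 0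
    refine Filter.Eventually.of_forall fun x => ?_
    by_cases h : F x = 0
    · simp [hu_def, h]
    · simp only [hu_def, if_neg h]
      rw [map_div₀, Complex.conj_ofReal, div_mul_eq_mul_div, mul_comm, Complex.mul_conj]
      norm_cast

end
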